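/- Let (X, 𝒳) be a measurable space and Y a metrizable space. Suppose f : X × Y → ℝ is (𝒳 ⊗ ℬ(Y))-measurable. Define D = {(x, r) ∈ X × 𝒫(Y) : ∫_Y f(x,y) dr(y) exists} and g(x,r) = ∫_Y f(x,y) dr(y) on D. Then D ∈ 𝒳 ⊗ ℬ(𝒫(Y)) and g is measurable with respect to the trace of 𝒳 ⊗ ℬ(𝒫(Y)) on D (with values in the extended reals). -/

import Mathlib

open MeasureTheory Filter Topology Function
open scoped NNReal BoundedContinuousFunction
open scoped ENNReal

/-- Borel σ-algebra of the topology of weak convergence on `𝒫(Y)`. -/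
noncomputable instance probabilityMeasureMeasurableSpace
    {Y : Type*} [MeasurableSpace Y] [TopologicalSpace Y] [OpensMeasurableSpace Y] :
    MeasurableSpace (ProbabilityMeasure Y) := borel _

section Aux

variable {Y : Type*} [TopologicalSpace Y] [TopologicalSpace.PseudoMetrizableSpace Y]
  [MeasurableSpace Y] [BorelSpace Y]

instance {Y : Type*} [MeasurableSpace Y] [TopologicalSpace Y] [OpensMeasurableSpace Y] :
    BorelSpace (ProbabilityMeasure Y) := ⟨rfl⟩

omit [TopologicalSpace.PseudoMetrizableSpace Y] in
lemma aux_continuous_lintegral_bcf (f : Y →ᵇ ℝ≥0) :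
    Continuous fun r : ProbabilityMeasure Y => ∫⁻ y, (f y : ℝ≥0∞) ∂(r : Measure Y) := by
  rw [continuous_iff_continuousAt]
  intro r
  exact (ProbabilityMeasure.tendsto_iff_forall_lintegral_tendsto.mp tendsto_id) f

lemma aux_measurable_apply_closed {F : Set Y} (hF : IsClosed F) :
    Measurable fun r : ProbabilityMeasure Y => (r : Measure Y) F := by
  have key : ∀ r : ProbabilityMeasure Y,
      Tendsto (fun n => ∫⁻ y, (hF.apprSeq n y : ℝ≥0∞) ∂(r : Measure Y)) atTop
        (𝓝 ((r : Measure Y) F)) :=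
    fun r => HasOuterApproxClosed.tendsto_lintegral_apprSeq hF (r : Measure Y)
  exact ENNReal.measurable_of_tendsto
    (fun n => (aux_continuous_lintegral_bcf (hF.apprSeq n)).measurable)
    (tendsto_pi_nhds.mpr key)

lemma aux_measurable_toMeasure :
    Measurable fun r : ProbabilityMeasure Y => (r : Measure Y) := by
  apply Measure.measurable_of_measurable_coe
  intro s hs
  refine MeasurableSpace.induction_on_inter
    (C := fun s _ => Measurable fun r : ProbabilityMeasure Y => (r : Measure Y) s)
    (BorelSpace.measurable_eq.trans borel_eq_generateFrom_isClosed)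
    (fun s hs t ht _ => hs.inter ht) ?_ ?_ ?_ ?_ s hs
  · simp only [measure_empty]
    exact measurable_const
  · exact fun t ht => aux_measurable_apply_closed ht
  · intro t ht hC
    have h : ∀ r : ProbabilityMeasure Y, (r : Measure Y) tᶜ = 1 - (r : Measure Y) t := by
      intro r
      rw [measure_compl ht (measure_ne_top _ _), measure_univ]
    simp only [h]
    exact Measurable.sub measurable_const hC
  · intro g hd hm hC
    have h : ∀ r : ProbabilityMeasure Y,
        (r : Measure Y) (⋃ i, g i) = ∑' i, (r : Measure Y) (g i) := by
      intro r
      exact measure_iUnion hd hm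
    simp only [h]
    exact Measurable.ennreal_tsum hC

end Aux

lemma aux_coe_toReal_ereal {a : ℝ≥0∞} (h : a ≠ ⊤) : ((a.toReal : ℝ) : EReal) = (a : EReal) := by
  rw [← EReal.toReal_coe_ennreal]
  exact EReal.coe_toReal (by simpa [EReal.coe_ennreal_eq_top_iff] using h)
    (EReal.coe_ennreal_ne_bot a)

lemma aux_measurable_ennreal_sub_ereal :
    Measurable fun q : ℝ≥0∞ × ℝ≥0∞ => (q.1 : EReal) - (q.2 : EReal) := by
  have hrepr : (fun q : ℝ≥0∞ × ℝ≥0∞ => (q.1 : EReal) - (q.2 : EReal)) =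
      fun q : ℝ≥0∞ × ℝ≥0∞ =>
        if q.2 = ⊤ then (⊥ : EReal)
        else if q.1 = ⊤ then (⊤ : EReal)
        else (((q.1.toReal : ℝ) - (q.2.toReal : ℝ) : ℝ) : EReal) := by
    funext q
    rcases eq_or_ne q.2 ⊤ with h2 | h2
    · simp only [h2, if_pos rfl, EReal.coe_ennreal_top]
      rw [sub_eq_add_neg, EReal.neg_top, EReal.add_bot]
      simp
    · rcases eq_or_ne q.1 ⊤ with h1 | h1
      · simp only [h2, if_neg h2, h1, if_pos rfl, EReal.coe_ennreal_top]
        rw [sub_eq_add_neg, ← aux_coe_toReal_ereal h2, ← EReal.coe_neg, EReal.top_add_coe]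
        simp
      · simp only [if_neg h2, if_neg h1]
        rw [← aux_coe_toReal_ereal h2, ← aux_coe_toReal_ereal h1, ← EReal.coe_sub]
  rw [hrepr]
  have hs2 : MeasurableSet {q : ℝ≥0∞ × ℝ≥0∞ | q.2 = ⊤} :=
    measurable_snd (measurableSet_singleton ⊤)
  have hs1 : MeasurableSet {q : ℝ≥0∞ × ℝ≥0∞ | q.1 = ⊤} :=
    measurable_fst (measurableSet_singleton ⊤)
  refine Measurable.ite hs2 measurable_const ?_
  refine Measurable.ite hs1 measurable_const ?_
  exact (measurable_fst.ennreal_toReal.sub measurable_snd.ennreal_toReal).coe_real_ereal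

/-- The set `D ⊆ X × 𝒫(Y)` on which `∫ f(x,·) dr` exists is product-measurable, and the
(extended-real valued) integral map `g(x,r) = ∫ f(x,·) dr` is measurable on `D` with the
trace σ-algebra. -/
theorem integral_in_measure_argument_measurable_on_existence_set
    {X Y : Type*} [MeasurableSpace X]
    [TopologicalSpace Y] [TopologicalSpace.PseudoMetrizableSpace Y]
    [MeasurableSpace Y] [BorelSpace Y]
    (f : X × Y → ℝ) (hf : Measurable f) :
    MeasurableSet {p : X × ProbabilityMeasure Y |
        min (∫⁻ y, ENNReal.ofReal (f (p.1, y)) ∂(p.2 : Measure Y))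
            (∫⁻ y, ENNReal.ofReal (-(f (p.1, y))) ∂(p.2 : Measure Y)) < ⊤} ∧
      Measurable (fun p : {p : X × ProbabilityMeasure Y |
          min (∫⁻ y, ENNReal.ofReal (f (p.1, y)) ∂(p.2 : Measure Y))
              (∫⁻ y, ENNReal.ofReal (-(f (p.1, y))) ∂(p.2 : Measure Y)) < ⊤} =>
        ((∫⁻ y, ENNReal.ofReal (f ((p : X × ProbabilityMeasure Y).1, y))
            ∂((p : X × ProbabilityMeasure Y).2 : Measure Y) : ℝ≥0∞) : EReal)
          - ((∫⁻ y, ENNReal.ofReal (-(f ((p : X × ProbabilityMeasure Y).1, y)))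
            ∂((p : X × ProbabilityMeasure Y).2 : Measure Y) : ℝ≥0∞) : EReal)) := by
  -- the "evaluation" kernel
  let κ : ProbabilityTheory.Kernel (X × ProbabilityMeasure Y) Y :=
    ⟨fun p => (p.2 : Measure Y), aux_measurable_toMeasure.comp measurable_snd⟩
  have hκ : ProbabilityTheory.IsMarkovKernel κ := ⟨fun p => show IsProbabilityMeasure ((p.2 : Measure Y)) from inferInstance⟩
  have key : ∀ g : X × Y → ℝ, Measurable g →
      Measurable fun p : X × ProbabilityMeasure Y =>
        ∫⁻ y, ENNReal.ofReal (g (p.1, y)) ∂(p.2 : Measure Y) := by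
    intro g hg
    have : Measurable fun p : X × ProbabilityMeasure Y =>
        ∫⁻ y, ENNReal.ofReal (g (p.1, y)) ∂(κ p) := by
      refine Measurable.lintegral_kernel_prod_right ?_
      exact ENNReal.measurable_ofReal.comp
        (hg.comp (measurable_fst.fst.prodMk measurable_snd))
    exact this
  have h1 := key f hf
  have h2 := key (fun q => -(f q)) hf.neg
  refine ⟨?_, ?_⟩
  · exact measurableSet_lt (h1.min h2) measurable_const
  · exact aux_measurable_ennreal_sub_ereal.comp
      ((h1.comp measurable_subtype_coe).prodMk (h2.comp measurable_subtype_coe))
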